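/- (Theorem 1, probabilistic form.) Consider the linear model Y = Xβ* + ε with Y ∈ ℝ^n, X ∈ ℝ^{n×p}, |supp(β*)| ≤ S, and ε independent mean-zero sub-Gaussian with variance proxy σ². Assume every column X_j of X satisfies ‖X_j‖₂ ≤ √n, and X satisfies the restricted eigenvalue condition with constant γ > 0 over the cone C(β*). Let α > 2 and λ₀ = σ √(α log p / n). Then with probability at least 1 − 2 n p^{−α/2}, every vector β̂ that is feasible for the constrained ℓ∞ problem with parameter λ₀ and satisfies ‖β̂‖₁ ≤ ‖β*‖₁ (in particular, every minimizer of ‖β‖₁ over the feasible set) obeys ‖β̂ − β*‖₂ ≤ (4σ/γ) √(α S log p). -/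

import Mathlib

open MeasureTheory ProbabilityTheory Finset

/-- The maximum absolute entry of a vector in `ℝ^n`. -/
noncomputable def linftyNorm {n : ℕ} (v : Fin n → ℝ) : ℝ := ⨆ i, |v i|

/-- Membership in the cone `C(β*)`: `‖ν_{S₀ᶜ}‖₁ ≤ ‖ν_{S₀}‖₁`, `S₀ = supp(β*)`. -/
def inCone {p : ℕ} (βstar ν : Fin p → ℝ) : Prop :=
  ∑ j ∈ Finset.univ.filter (fun j => βstar j = 0), |ν j|
    ≤ ∑ j ∈ Finset.univ.filter (fun j => βstar j ≠ 0), |ν j|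

/-- Feasibility for the constrained ℓ∞ problem: `(1/√n) ‖Y − Xβ‖_∞ ≤ λ₀`. -/
noncomputable def feasible {n p : ℕ} (Y : Fin n → ℝ) (X : Matrix (Fin n) (Fin p) ℝ)
    (lam₀ : ℝ) (β : Fin p → ℝ) : Prop :=
  (1 / Real.sqrt n) * linftyNorm (fun i => Y i - X.mulVec β i) ≤ lam₀

lemma cs_sqrt {ι : Type*} (s : Finset ι) (f g : ι → ℝ) :
    |∑ i ∈ s, f i * g i| ≤ Real.sqrt (∑ i ∈ s, f i ^ 2) * Real.sqrt (∑ i ∈ s, g i ^ 2) := by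
  rw [← Real.sqrt_mul (by positivity), ← Real.sqrt_sq_eq_abs]
  exact Real.sqrt_le_sqrt (sum_mul_sq_le_sq_mul_sq s f g)

lemma abs_le_linfty {n : ℕ} (v : Fin n → ℝ) (i : Fin n) : |v i| ≤ linftyNorm v := by
  exact le_ciSup (f := fun i => |v i|) (Set.Finite.bddAbove (Set.finite_range _)) i

/-- cone membership from ℓ¹ minimality -/
lemma cone_of_l1 {p : ℕ} (βstar βhat : Fin p → ℝ)
    (hl1 : (∑ j, |βhat j|) ≤ (∑ j, |βstar j|)) :
    inCone βstar (fun j => βhat j - βstar j) := by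
  classical
  unfold inCone
  set S₀ := Finset.univ.filter (fun j => βstar j ≠ 0) with hS₀
  have hsplit : (Finset.univ.filter (fun j => βstar j = 0)) = S₀ᶜ := by
    ext j; simp [hS₀]
  rw [hsplit]
  have h1 : ∑ j, |βstar j| = ∑ j ∈ S₀, |βstar j| := by
    rw [← Finset.sum_filter_add_sum_filter_not Finset.univ (fun j => βstar j ≠ 0)]
    have hz : ∑ j ∈ Finset.univ.filter (fun j => ¬ βstar j ≠ 0), |βstar j| = 0 := by
      apply Finset.sum_eq_zero; intro j hj
      simp only [Finset.mem_filter, not_not] at hj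
      simp [hj.2]
    rw [hz, add_zero, hS₀]
  have h2 : ∑ j, |βhat j| = ∑ j ∈ S₀, |βhat j| + ∑ j ∈ S₀ᶜ, |βhat j| :=
    (Finset.sum_add_sum_compl S₀ _).symm
  have h3 : ∀ j ∈ S₀ᶜ, |βhat j| = |βhat j - βstar j| := by
    intro j hj
    simp only [hS₀, Finset.mem_compl, Finset.mem_filter, Finset.mem_univ, true_and,
      not_not] at hj
    rw [hj, sub_zero]
  rw [Finset.sum_congr rfl h3] at h2
  have h4 : ∀ j ∈ S₀, |βstar j| - |βhat j - βstar j| ≤ |βhat j| := fun j _ => by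
    have h5 : βhat j + (βstar j - βhat j) = βstar j := by ring
    have h6 := abs_add_le (βhat j) (βstar j - βhat j)
    rw [h5, abs_sub_comm (βstar j) (βhat j)] at h6
    linarith
  -- |βstar j| - |νj| ≤ |βhat j| since βhat = βstar + ν
  have key : ∑ j ∈ S₀, (|βstar j| - |βhat j - βstar j|) ≤ ∑ j ∈ S₀, |βhat j| :=
    Finset.sum_le_sum h4
  rw [Finset.sum_sub_distrib] at key
  linarith [h1 ▸ hl1, h2]


lemma dot_bound {n : ℕ} (hn0 : (0:ℝ) < n) (x v : Fin n → ℝ)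
    (hx : Real.sqrt (∑ i, (x i) ^ 2) ≤ Real.sqrt n)
    (t : ℝ) (ht : 0 ≤ t) (hv : ∀ i, |v i| ≤ t) :
    |∑ i, x i * v i| ≤ n * t := by
  have h1 : Real.sqrt (∑ i, (v i) ^ 2) ≤ Real.sqrt (n * t ^ 2) := by
    apply Real.sqrt_le_sqrt
    calc ∑ i, (v i) ^ 2 ≤ ∑ _i : Fin n, t ^ 2 := by
          apply Finset.sum_le_sum
          intro i _
          calc (v i)^2 = |v i|^2 := (sq_abs _).symm
            _ ≤ t^2 := by nlinarith [hv i, abs_nonneg (v i)]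
      _ = n * t ^ 2 := by simp [Finset.sum_const, Finset.card_univ, nsmul_eq_mul]
  have h2 : Real.sqrt ((n : ℝ) * t ^ 2) = Real.sqrt n * t := by
    rw [Real.sqrt_mul hn0.le, Real.sqrt_sq ht]
  calc |∑ i, x i * v i| ≤ Real.sqrt (∑ i, (x i)^2) * Real.sqrt (∑ i, (v i)^2) :=
        cs_sqrt _ _ _
    _ ≤ Real.sqrt n * (Real.sqrt n * t) := by
        rw [← h2]
        exact mul_le_mul hx h1 (Real.sqrt_nonneg _) (Real.sqrt_nonneg _)
    _ = n * t := by rw [← mul_assoc, Real.mul_self_sqrt hn0.le]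

/-- deterministic core -/
lemma det_core {n p S : ℕ} (hn : 1 ≤ n) (hS : 0 < S)
    (X : Matrix (Fin n) (Fin p) ℝ) (βstar βhat : Fin p → ℝ)
    (hsparse : (Finset.univ.filter (fun j => βstar j ≠ 0)).card ≤ S)
    (hcol : ∀ j, Real.sqrt (∑ i, (X i j) ^ 2) ≤ Real.sqrt n)
    (γ : ℝ) (hγ : 0 < γ)
    (hRE : ∀ ν : Fin p → ℝ, inCone βstar ν →
      γ * ∑ j, (ν j) ^ 2 ≤ (1 / (n : ℝ)) * ∑ i, (X.mulVec ν i) ^ 2)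
    (t : ℝ) (ht : 0 ≤ t) (e : Fin n → ℝ) (he : ∀ i, |e i| ≤ t)
    (hfeas : (1 / Real.sqrt n) * linftyNorm
      (fun i => (X.mulVec βstar i + e i) - X.mulVec βhat i) ≤ t / Real.sqrt n)
    (hl1 : (∑ j, |βhat j|) ≤ (∑ j, |βstar j|)) :
    Real.sqrt (∑ j, (βhat j - βstar j) ^ 2) ≤ 4 * t * Real.sqrt S / γ := by
  classical
  have hn0 : (0:ℝ) < n := by exact_mod_cast hn
  set ν : Fin p → ℝ := fun j => βhat j - βstar j with hν
  set r : Fin n → ℝ := fun i => (X.mulVec βstar i + e i) - X.mulVec βhat i with hr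
  have hrle : ∀ i, |r i| ≤ t := by
    intro i
    have hL : linftyNorm r ≤ t := by
      have hs : (0:ℝ) < Real.sqrt n := Real.sqrt_pos.2 hn0
      have h7 := mul_le_mul_of_nonneg_right hfeas hs.le
      rw [div_mul_cancel₀ _ hs.ne'] at h7
      calc linftyNorm r = 1 / Real.sqrt n * linftyNorm r * Real.sqrt n := by field_simp
        _ ≤ t := h7
    exact (abs_le_linfty r i).trans hL
  have hXν : ∀ i, X.mulVec ν i = e i - r i := by
    intro i
    simp only [hν, hr]
    have : X.mulVec (fun j => βhat j - βstar j) i = X.mulVec βhat i - X.mulVec βstar i := by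
      simp [Matrix.mulVec, dotProduct, mul_sub, Finset.sum_sub_distrib]
    rw [this]; ring
  -- bound on column correlations
  have hcorr : ∀ j, |∑ i, X i j * X.mulVec ν i| ≤ 2 * n * t := by
    intro j
    have h1 : |∑ i, X i j * e i| ≤ n * t :=
      dot_bound hn0 (fun i => X i j) e (hcol j) t ht he
    have h2 : |∑ i, X i j * r i| ≤ n * t :=
      dot_bound hn0 (fun i => X i j) r (hcol j) t ht hrle
    calc |∑ i, X i j * X.mulVec ν i| = |∑ i, (X i j * e i - X i j * r i)| := by
          congr 1; apply Finset.sum_congr rfl; intro i _; rw [hXν i]; ring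
      _ = |∑ i, X i j * e i - ∑ i, X i j * r i| := by rw [Finset.sum_sub_distrib]
      _ ≤ |∑ i, X i j * e i| + |∑ i, X i j * r i| := abs_sub _ _
      _ ≤ 2 * n * t := by linarith
  -- sum expansion
  have hexp : ∑ i, (X.mulVec ν i)^2 = ∑ j, ν j * ∑ i, X i j * X.mulVec ν i := by
    have h1 : ∀ i, (X.mulVec ν i)^2 = ∑ j, ν j * (X i j * X.mulVec ν i) := by
      intro i
      have h2 : X.mulVec ν i = ∑ j, X i j * ν j := rfl
      calc (X.mulVec ν i)^2 = (∑ j, X i j * ν j) * X.mulVec ν i := by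
            rw [← h2]; ring
        _ = ∑ j, ν j * (X i j * X.mulVec ν i) := by
            rw [Finset.sum_mul]; apply Finset.sum_congr rfl; intro j _; ring
    calc ∑ i, (X.mulVec ν i)^2 = ∑ i, ∑ j, ν j * (X i j * X.mulVec ν i) :=
          Finset.sum_congr rfl (fun i _ => h1 i)
      _ = ∑ j, ∑ i, ν j * (X i j * X.mulVec ν i) := Finset.sum_comm
      _ = ∑ j, ν j * ∑ i, X i j * X.mulVec ν i := by
          apply Finset.sum_congr rfl; intro j _; rw [Finset.mul_sum]
  -- cone membership
  have hcone : inCone βstar ν := cone_of_l1 βstar βhat hl1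
  -- ℓ¹ bound from cone + sparsity
  set q : ℝ := Real.sqrt (∑ j, (ν j) ^ 2) with hq
  have hq0 : 0 ≤ q := Real.sqrt_nonneg _
  have hqsq : q ^ 2 = ∑ j, (ν j) ^ 2 := Real.sq_sqrt (by positivity)
  set S₀ := Finset.univ.filter (fun j => βstar j ≠ 0) with hS₀
  have hl1ν : ∑ j, |ν j| ≤ 2 * Real.sqrt S * q := by
    have hsplit : ∑ j, |ν j| = ∑ j ∈ S₀, |ν j| + ∑ j ∈ S₀ᶜ, |ν j| :=
      (Finset.sum_add_sum_compl S₀ _).symm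
    have hcompl : (Finset.univ.filter (fun j => βstar j = 0)) = S₀ᶜ := by
      ext j; simp [hS₀]
    have hcone' : ∑ j ∈ S₀ᶜ, |ν j| ≤ ∑ j ∈ S₀, |ν j| := by
      rw [← hcompl]; exact hcone
    have hCS : ∑ j ∈ S₀, |ν j| ≤ Real.sqrt S * q := by
      have h3 : ∑ j ∈ S₀, |ν j| = abs (∑ j ∈ S₀, (1 : ℝ) * abs (ν j)) := by
        rw [abs_of_nonneg (by positivity)]
        apply Finset.sum_congr rfl; intro j _; rw [one_mul]
      rw [h3]
      calc abs (∑ j ∈ S₀, (1 : ℝ) * abs (ν j))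
          ≤ Real.sqrt (∑ _j ∈ S₀, (1:ℝ)^2) * Real.sqrt (∑ j ∈ S₀, (abs (ν j))^2) :=
            cs_sqrt _ _ _
        _ ≤ Real.sqrt S * q := by
            apply mul_le_mul _ _ (Real.sqrt_nonneg _) (Real.sqrt_nonneg _)
            · apply Real.sqrt_le_sqrt
              simp only [one_pow, Finset.sum_const, nsmul_eq_mul, mul_one]
              exact_mod_cast hsparse
            · apply Real.sqrt_le_sqrt
              calc ∑ j ∈ S₀, (abs (ν j))^2 = ∑ j ∈ S₀, (ν j)^2 := by
                    apply Finset.sum_congr rfl; intro j _; exact sq_abs _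
                _ ≤ ∑ j, (ν j)^2 :=
                    Finset.sum_le_sum_of_subset_of_nonneg (Finset.subset_univ _)
                      (fun j _ _ => sq_nonneg _)
      
    linarith
  -- main chain
  have hmain : γ * q ^ 2 ≤ 4 * t * Real.sqrt S * q := by
    have h0 := hRE ν hcone
    rw [hexp] at h0
    have h5 : ∑ j, ν j * ∑ i, X i j * X.mulVec ν i ≤ (∑ j, |ν j|) * (2 * n * t) := by
      rw [Finset.sum_mul]
      apply Finset.sum_le_sum
      intro j _
      calc ν j * ∑ i, X i j * X.mulVec ν i
          ≤ |ν j * ∑ i, X i j * X.mulVec ν i| := le_abs_self _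
        _ = |ν j| * |∑ i, X i j * X.mulVec ν i| := abs_mul _ _
        _ ≤ |ν j| * (2 * n * t) := by
            exact mul_le_mul_of_nonneg_left (hcorr j) (abs_nonneg _)
    have h6 : (1 / (n:ℝ)) * ∑ j, ν j * ∑ i, X i j * X.mulVec ν i
        ≤ (1 / (n:ℝ)) * ((∑ j, |ν j|) * (2 * n * t)) :=
      mul_le_mul_of_nonneg_left h5 (by positivity)
    have h7 : (1 / (n:ℝ)) * ((∑ j, |ν j|) * (2 * n * t)) = 2 * t * ∑ j, |ν j| := by
      field_simp
    have h8 : γ * ∑ j, (ν j)^2 ≤ 2 * t * ∑ j, |ν j| := by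
      calc γ * ∑ j, (ν j)^2 ≤ (1 / (n:ℝ)) * ∑ j, ν j * ∑ i, X i j * X.mulVec ν i := h0
        _ ≤ 2 * t * ∑ j, |ν j| := by rw [← h7]; exact h6
    rw [hqsq]
    calc γ * ∑ j, (ν j)^2 ≤ 2 * t * ∑ j, |ν j| := h8
      _ ≤ 2 * t * (2 * Real.sqrt S * q) :=
          mul_le_mul_of_nonneg_left hl1ν (by positivity)
      _ = 4 * t * Real.sqrt S * q := by ring
  -- conclude
  show q ≤ 4 * t * Real.sqrt S / γ
  rw [le_div_iff₀ hγ]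
  rcases eq_or_lt_of_le hq0 with h | h
  · rw [← h, zero_mul]; positivity
  · nlinarith

/-- Theorem 1, probabilistic form: with probability at least
`1 − 2 n p^{−α/2}`, every feasible `β̂` with `‖β̂‖₁ ≤ ‖β*‖₁` satisfies
`‖β̂ − β*‖₂ ≤ (4σ/γ) √(α S log p)`. -/
theorem estimation_error_prob
    {Ω : Type*} [MeasureSpace Ω] [IsProbabilityMeasure (ℙ : Measure Ω)]
    (n p : ℕ) (hn : 1 ≤ n) (hp : 2 ≤ p) (σ : ℝ) (hσ : 0 < σ)
    (X : Matrix (Fin n) (Fin p) ℝ) (βstar : Fin p → ℝ)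
    (S : ℕ) (hS : 0 < S)
    (hsparse : (Finset.univ.filter (fun j => βstar j ≠ 0)).card ≤ S)
    (hcol : ∀ j, Real.sqrt (∑ i, (X i j) ^ 2) ≤ Real.sqrt n)
    (γ : ℝ) (hγ : 0 < γ)
    (hRE : ∀ ν : Fin p → ℝ, inCone βstar ν →
      γ * ∑ j, (ν j) ^ 2 ≤ (1 / (n : ℝ)) * ∑ i, (X.mulVec ν i) ^ 2)
    (ε : Fin n → Ω → ℝ)
    (hmeas : ∀ i, Measurable (ε i))
    (hmean : ∀ i, ∫ ω, ε i ω = 0)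
    (hindep : iIndepFun ε ℙ)
    (hsub : ∀ i, ∀ t : ℝ, 0 ≤ t →
      ℙ {ω | t < |ε i ω|} ≤ ENNReal.ofReal (2 * Real.exp (-(t ^ 2) / (2 * σ ^ 2))))
    (Y : Ω → Fin n → ℝ)
    (hY : ∀ ω, ∀ i, Y ω i = X.mulVec βstar i + ε i ω)
    (α : ℝ) (hα : 2 < α)
    (lam₀ : ℝ) (hlam₀ : lam₀ = σ * Real.sqrt (α * Real.log p / n)) :
    ENNReal.ofReal (1 - 2 * n * (p : ℝ) ^ (-(α / 2)))
      ≤ ℙ {ω | ∀ βhat : Fin p → ℝ,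
            feasible (Y ω) X lam₀ βhat → (∑ j, |βhat j|) ≤ (∑ j, |βstar j|) →
            Real.sqrt (∑ j, (βhat j - βstar j) ^ 2)
              ≤ (4 * σ / γ) * Real.sqrt (α * S * Real.log p)} := by
  classical
  have hn0 : (0:ℝ) < n := by exact_mod_cast hn
  have hp1 : (1:ℝ) < p := by exact_mod_cast (by omega : 1 < p)
  have hlogp : 0 < Real.log p := Real.log_pos hp1
  have hα0 : (0:ℝ) < α := by linarith
  set t : ℝ := σ * Real.sqrt (α * Real.log p) with htdef
  have ht : 0 ≤ t := by positivity
  -- lam₀ = t / √n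
  have hlam : lam₀ = t / Real.sqrt n := by
    rw [hlam₀, htdef, Real.sqrt_div (by positivity) (n : ℝ), mul_div_assoc]
  -- the good event
  set E : Set Ω := ⋂ i, {ω | |ε i ω| ≤ t} with hE
  have hEmeas : MeasurableSet E := by
    apply MeasurableSet.iInter
    intro i
    exact measurableSet_le ((hmeas i).abs) measurable_const
  -- E is contained in the target event
  have hsub2 : E ⊆ {ω | ∀ βhat : Fin p → ℝ,
      feasible (Y ω) X lam₀ βhat → (∑ j, |βhat j|) ≤ (∑ j, |βstar j|) →
      Real.sqrt (∑ j, (βhat j - βstar j) ^ 2)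
        ≤ (4 * σ / γ) * Real.sqrt (α * S * Real.log p)} := by
    intro ω hω
    simp only [hE, Set.mem_iInter, Set.mem_setOf_eq] at hω
    intro βhat hfeas hl1
    have hfeas' : (1 / Real.sqrt n) * linftyNorm
        (fun i => (X.mulVec βstar i + ε i ω) - X.mulVec βhat i) ≤ t / Real.sqrt n := by
      have : (fun i => (X.mulVec βstar i + ε i ω) - X.mulVec βhat i)
          = (fun i => Y ω i - X.mulVec βhat i) := by
        funext i; rw [hY ω i]
      rw [this, ← hlam]
      exact hfeas
    have hdet := det_core hn hS X βstar βhat hsparse hcol γ hγ hRE t ht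
      (fun i => ε i ω) hω hfeas' hl1
    have heq : 4 * t * Real.sqrt S / γ
        = (4 * σ / γ) * Real.sqrt (α * S * Real.log p) := by
      have h1 : α * (S:ℝ) * Real.log p = (α * Real.log p) * S := by ring
      rw [h1, Real.sqrt_mul (by positivity), htdef]
      field_simp
    exact heq ▸ hdet
  -- probability of E
  have hcompl : ℙ Eᶜ ≤ ENNReal.ofReal (2 * n * (p : ℝ) ^ (-(α / 2))) := by
    have hEc : Eᶜ = ⋃ i, {ω | t < |ε i ω|} := by
      rw [hE, Set.compl_iInter]
      apply Set.iUnion_congr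
      intro i
      ext ω
      simp [not_le]
    have hexpeq : 2 * Real.exp (-(t ^ 2) / (2 * σ ^ 2)) = 2 * (p:ℝ) ^ (-(α / 2)) := by
      congr 1
      have ht2 : t ^ 2 = σ ^ 2 * (α * Real.log p) := by
        rw [htdef, mul_pow, Real.sq_sqrt (by positivity)]
      rw [Real.rpow_def_of_pos (by positivity : (0:ℝ) < p)]
      congr 1
      rw [ht2]
      field_simp
    calc ℙ Eᶜ ≤ ∑' i : Fin n, ℙ {ω | t < |ε i ω|} := by
          rw [hEc]; exact measure_iUnion_le _
      _ ≤ ∑' i : Fin n, ENNReal.ofReal (2 * Real.exp (-(t ^ 2) / (2 * σ ^ 2))) := by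
          apply ENNReal.tsum_le_tsum
          intro i
          exact hsub i t ht
      _ = (n : ENNReal) * ENNReal.ofReal (2 * Real.exp (-(t ^ 2) / (2 * σ ^ 2))) := by
          rw [tsum_fintype]
          simp [Finset.sum_const, Finset.card_univ, nsmul_eq_mul]
      _ = ENNReal.ofReal (2 * n * (p : ℝ) ^ (-(α / 2))) := by
          rw [hexpeq, ← ENNReal.ofReal_natCast n,
            ← ENNReal.ofReal_mul (by positivity)]
          congr 1
          ring
  calc ENNReal.ofReal (1 - 2 * n * (p : ℝ) ^ (-(α / 2)))
      = 1 - ENNReal.ofReal (2 * n * (p : ℝ) ^ (-(α / 2))) := by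
        rw [ENNReal.ofReal_sub 1 (by positivity), ENNReal.ofReal_one]
    _ ≤ ℙ E := by
        rw [tsub_le_iff_right]
        have h1 : ℙ E + ℙ Eᶜ = 1 := by
          rw [measure_add_measure_compl hEmeas, measure_univ]
        calc (1 : ENNReal) = ℙ E + ℙ Eᶜ := h1.symm
          _ ≤ ℙ E + ENNReal.ofReal (2 * n * (p : ℝ) ^ (-(α / 2))) :=
              add_le_add_right hcompl _
    _ ≤ ℙ _ := measure_mono hsub2
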